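/- arXiv:2603.22879 — 2 statements merged into one kernel-verified Lean document; each statement's English description precedes it below -/
import Mathlib

section
/- For a logit vector z ∈ ℝ^K with a strict unique maximum at coordinate c, the function T ↦ softmax(z/T)_c is strictly decreasing on (0, ∞). -/
/-- For a logit vector with strict unique maximum at `c`, the map
`T ↦ softmax(z/T)_c` is strictly decreasing on `(0, ∞)`. -/
theorem softmax_top_class_strictAntiOn_temperature
    (K : ℕ) (hK : 2 ≤ K) (z : Fin K → ℝ) (c : Fin K)
    (hc : ∀ k, k ≠ c → z k < z c) :
    StrictAntiOn (fun T : ℝ => Real.exp (z c / T) / ∑ k, Real.exp (z k / T))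
      (Set.Ioi 0) := by
  have key : ∀ T : ℝ, 0 < T →
      Real.exp (z c / T) / ∑ k, Real.exp (z k / T)
        = 1 / ∑ k, Real.exp ((z k - z c) / T) := by
    intro T hT
    have h1 : ∑ k, Real.exp (z k / T)
        = (∑ k, Real.exp ((z k - z c) / T)) * Real.exp (z c / T) := by
      rw [Finset.sum_mul]
      refine Finset.sum_congr rfl fun k _ => ?_
      rw [← Real.exp_add]
      congr 1
      field_simp
      ring
    rw [h1, mul_comm, ← div_div, div_self (Real.exp_pos _).ne']
  intro a ha b hb hab
  simp only [Set.mem_Ioi] at ha hb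
  simp only [key a ha, key b hb]
  have hsum : ∀ T : ℝ, 0 < T → (0:ℝ) < ∑ k, Real.exp ((z k - z c) / T) := by
    intro T hT
    refine Finset.sum_pos (fun k _ => Real.exp_pos _) ?_
    haveI : Nonempty (Fin K) := Fin.pos_iff_nonempty.mp (by omega)
    exact Finset.univ_nonempty
  have hlt : ∑ k, Real.exp ((z k - z c) / a) < ∑ k, Real.exp ((z k - z c) / b) := by
    obtain ⟨k0, hk0⟩ := Fintype.exists_ne_of_one_lt_card (by simp; omega) c
    refine Finset.sum_lt_sum (fun k _ => ?_) ⟨k0, Finset.mem_univ _, ?_⟩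
    · apply Real.exp_le_exp.mpr
      rcases eq_or_ne k c with rfl | hk
      · simp
      · have hd : z k - z c < 0 := by linarith [hc k hk]
        rw [div_le_div_iff₀ ha hb]
        nlinarith
    · apply Real.exp_lt_exp.mpr
      have hd : z k0 - z c < 0 := by linarith [hc k0 hk0]
      rw [div_lt_div_iff₀ ha hb]
      nlinarith
  exact one_div_lt_one_div_of_lt (hsum a ha) hlt
end

section
/- The map T ↦ -log softmax(z/T)_c (the per-example voted-label NLL as a function of temperature) is continuous and strictly increasing on (0, ∞) when z has strict unique maximum at c, tends to 0 as T → 0⁺, and tends to log K as T → ∞. -/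
open Filter Topology

/-- The per-example voted-label NLL `L(T) = -log softmax(z/T)_c` is
continuous and strictly increasing on `(0, ∞)`, tends to `0` as `T → 0⁺`, and
tends to `log K` as `T → ∞`. -/
theorem voted_label_nll_monotone_continuous_limits
    (K : ℕ) (hK : 2 ≤ K) (z : Fin K → ℝ) (c : Fin K)
    (hc : ∀ k, k ≠ c → z k < z c)
    (L : ℝ → ℝ)
    (hL : ∀ T, L T = -Real.log (Real.exp (z c / T) / ∑ k, Real.exp (z k / T))) :
    ContinuousOn L (Set.Ioi 0) ∧
      StrictMonoOn L (Set.Ioi 0) ∧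
      Tendsto L (𝓝[>] 0) (𝓝 0) ∧
      Tendsto L atTop (𝓝 (Real.log K)) := by
  have hKpos : 0 < K := by omega
  haveI : NeZero K := ⟨by omega⟩
  set g : ℝ → ℝ := fun T => ∑ k, Real.exp ((z k - z c) / T) with hg
  have hgpos : ∀ T : ℝ, 0 < g T := fun T =>
    Finset.sum_pos (fun k _ => Real.exp_pos _) Finset.univ_nonempty
  have hSpos : ∀ T : ℝ, 0 < ∑ k, Real.exp (z k / T) := fun T =>
    Finset.sum_pos (fun k _ => Real.exp_pos _) Finset.univ_nonempty
  -- Key rewriting of L on all of ℝ (the identity holds for every T since `/T` is total)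
  have key : ∀ T : ℝ, L T = Real.log (g T) := by
    intro T
    have h1 : g T = (∑ k, Real.exp (z k / T)) / Real.exp (z c / T) := by
      rw [Finset.sum_div]
      refine Finset.sum_congr rfl fun k _ => ?_
      rw [← Real.exp_sub, ← sub_div]
    rw [hL T, h1, Real.log_div (Real.exp_ne_zero _) (ne_of_gt (hSpos T)),
      Real.log_div (ne_of_gt (hSpos T)) (Real.exp_ne_zero _), Real.log_exp]
    ring
  -- exists another index
  obtain ⟨k₀, hk₀⟩ : ∃ k : Fin K, k ≠ c := by
    rcases Fintype.exists_ne_of_one_lt_card (by rw [Fintype.card_fin]; omega) c with ⟨k, hk⟩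
    exact ⟨k, hk⟩
  -- continuity
  have hgcont : ContinuousOn g (Set.Ioi 0) := by
    apply continuousOn_finset_sum
    intro k _
    exact Real.continuous_exp.comp_continuousOn
      (continuousOn_const.div continuousOn_id fun x hx => ne_of_gt hx)
  have hcont : ContinuousOn L (Set.Ioi 0) := by
    have : ContinuousOn (fun T => Real.log (g T)) (Set.Ioi 0) :=
      Real.continuousOn_log.comp hgcont fun x _ => ne_of_gt (hgpos x)
    exact this.congr fun x _ => key x
  -- strict monotonicity
  have hmono : StrictMonoOn L (Set.Ioi 0) := by
    intro T₁ hT₁ T₂ hT₂ h12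
    rw [key, key]
    apply Real.log_lt_log (hgpos T₁)
    apply Finset.sum_lt_sum
    · intro k _
      apply Real.exp_le_exp.2
      rw [div_eq_mul_inv, div_eq_mul_inv]
      have hd : z k - z c ≤ 0 := by
        rcases eq_or_ne k c with rfl | hk
        · simp
        · linarith [hc k hk]
      exact mul_le_mul_of_nonpos_left (inv_anti₀ (Set.mem_Ioi.1 hT₁) h12.le) hd
    · refine ⟨k₀, Finset.mem_univ _, ?_⟩
      apply Real.exp_lt_exp.2
      have hd : z k₀ - z c < 0 := by linarith [hc k₀ hk₀]
      rw [div_eq_mul_inv, div_eq_mul_inv]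
      apply mul_lt_mul_of_neg_left _ hd
      exact inv_strictAnti₀ (Set.mem_Ioi.1 hT₁) h12
  -- limit at 0⁺
  have hlim0 : Tendsto L (𝓝[>] 0) (𝓝 0) := by
    have hsum : Tendsto g (𝓝[>] 0) (𝓝 (∑ k : Fin K, if k = c then (1:ℝ) else 0)) := by
      apply tendsto_finset_sum
      intro k _
      rcases eq_or_ne k c with rfl | hk
      · simpa using tendsto_const_nhds.congr
          (fun T : ℝ => by simp : ∀ T : ℝ, (1:ℝ) = Real.exp ((z k - z k) / T))
      · simp only [if_neg hk]
        have hd : z k - z c < 0 := by linarith [hc k hk]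
        have : Tendsto (fun T : ℝ => (z k - z c) / T) (𝓝[>] 0) atBot := by
          simp only [div_eq_mul_inv]
          exact Tendsto.const_mul_atTop_of_neg hd tendsto_inv_nhdsGT_zero
        exact Real.tendsto_exp_atBot.comp this
    have h1 : (∑ k : Fin K, if k = c then (1:ℝ) else 0) = 1 := by simp
    rw [h1] at hsum
    have : Tendsto (fun T => Real.log (g T)) (𝓝[>] 0) (𝓝 (Real.log 1)) :=
      (Real.continuousAt_log one_ne_zero).tendsto.comp hsum
    rw [Real.log_one] at this
    exact this.congr fun T => (key T).symm
  -- limit at ∞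
  have hlimtop : Tendsto L atTop (𝓝 (Real.log K)) := by
    have hsum : Tendsto g atTop (𝓝 (∑ _k : Fin K, (1:ℝ))) := by
      apply tendsto_finset_sum
      intro k _
      have : Tendsto (fun T : ℝ => (z k - z c) / T) atTop (𝓝 0) :=
        tendsto_const_nhds.div_atTop tendsto_id
      simpa [Function.comp_def] using Real.continuous_exp.continuousAt.tendsto.comp this
    have h1 : (∑ _k : Fin K, (1:ℝ)) = K := by simp
    rw [h1] at hsum
    have hKne : (K : ℝ) ≠ 0 := Nat.cast_ne_zero.2 (by omega)
    have : Tendsto (fun T => Real.log (g T)) atTop (𝓝 (Real.log K)) :=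
      (Real.continuousAt_log hKne).tendsto.comp hsum
    exact this.congr fun T => (key T).symm
  exact ⟨hcont, hmono, hlim0, hlimtop⟩
end
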